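/- (DeMarr lemma, seminorm version) Let X be a real vector space and q a seminorm on X. Let Y be a nonempty finite-diameter subset of X that is compact in a topology making q continuous, with sup{q(x−y) : x,y ∈ Y} = r > 0. Then there exists u in the convex hull of Y with sup{q(u−y) : y ∈ Y} < r. -/

import Mathlib

open scoped Topology

/-- DeMarr lemma, seminorm version: if `q` is a continuous seminorm on a
real topological vector space, `Y` a nonempty compact subset with `q`-diameter
`r = sup {q(x-y) : x,y ∈ Y} > 0`, then some `u ∈ conv(Y)` has
`sup {q(u-y) : y ∈ Y} < r`. -/
theorem stmt3 {X : Type*} [AddCommGroup X] [Module ℝ X] [TopologicalSpace X]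
    [IsTopologicalAddGroup X] [ContinuousSMul ℝ X]
    (q : Seminorm ℝ X) (hqc : Continuous q)
    (Y : Set X) (hYc : IsCompact Y) (hYne : Y.Nonempty)
    (r : ℝ) (hr : r = sSup {t : ℝ | ∃ x ∈ Y, ∃ y ∈ Y, t = q (x - y)})
    (hrpos : 0 < r) :
    ∃ u ∈ convexHull ℝ Y, sSup {t : ℝ | ∃ y ∈ Y, t = q (u - y)} < r := by
  classical
  -- attainment of the diameter
  have hYY : IsCompact (Y ×ˢ Y) := hYc.prod hYc
  have hfc : ContinuousOn (fun p : X × X => q (p.1 - p.2)) (Y ×ˢ Y) :=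
    (hqc.comp (continuous_fst.sub continuous_snd)).continuousOn
  have hset : {t : ℝ | ∃ x ∈ Y, ∃ y ∈ Y, t = q (x - y)} =
      (fun p : X × X => q (p.1 - p.2)) '' (Y ×ˢ Y) := by
    ext t; constructor
    · rintro ⟨x, hx, y, hy, rfl⟩; exact ⟨(x, y), ⟨hx, hy⟩, rfl⟩
    · rintro ⟨⟨x, y⟩, ⟨hx, hy⟩, rfl⟩; exact ⟨x, hx, y, hy, rfl⟩
  obtain ⟨⟨a, b⟩, ⟨haY, hbY⟩, hab, hmax⟩ :=
    hYY.exists_sSup_image_eq_and_ge (hYne.prod hYne) hfc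
  rw [hset, hab] at hr
  have hbound : ∀ x ∈ Y, ∀ y ∈ Y, q (x - y) ≤ r := fun x hx y hy => by
    rw [hr]; exact hmax (x, y) ⟨hx, hy⟩
  have hne_ab : a ≠ b := by
    rintro rfl; rw [sub_self, map_zero] at hr; exact hrpos.ne' hr
  -- finite cover of Y by q-balls of radius r/2
  obtain ⟨C, hcov⟩ : ∃ C : Finset X, Y ⊆ ⋃ c ∈ C, {x | q (x - c) < r / 2} := by
    have hopen : ∀ c : X, IsOpen {x | q (x - c) < r / 2} := fun c =>
      isOpen_lt (hqc.comp (continuous_id.sub continuous_const)) continuous_const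
    have hc : Y ⊆ ⋃ c : X, {x | q (x - c) < r / 2} := fun x hx =>
      Set.mem_iUnion.2 ⟨x, by simp [half_pos hrpos]⟩
    exact hYc.elim_finite_subcover _ hopen hc
  -- property: finite subsets of Y with all pairwise q-distances equal to r
  set P : Finset X → Prop := fun F => ↑F ⊆ Y ∧ ∀ x ∈ F, ∀ y ∈ F, x ≠ y → q (x - y) = r
    with hP
  -- cardinality bound
  have hPcard : ∀ F, P F → F.card ≤ C.card := by
    rintro F ⟨hFY, hFr⟩
    set f : X → X := fun x =>
      if h : ∃ c ∈ C, q (x - c) < r / 2 then h.choose else x with hf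
    have hfspec : ∀ x ∈ F, f x ∈ C ∧ q (x - f x) < r / 2 := by
      intro x hx
      have : ∃ c ∈ C, q (x - c) < r / 2 := by
        have := hcov (hFY hx); simpa using this
      rw [hf]; simp only [dif_pos this]
      exact ⟨this.choose_spec.1, this.choose_spec.2⟩
    by_contra hlt
    push_neg at hlt
    obtain ⟨x, hx, y, hy, hxy, hfxy⟩ :=
      Finset.exists_ne_map_eq_of_card_lt_of_maps_to hlt fun x hx => (hfspec x hx).1
    have h1 : q (x - y) ≤ q (x - f x) + q (f y - y) := by
      have : x - y = (x - f x) + (f y - y) := by rw [hfxy]; abel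
      rw [this]; exact map_add_le_add q _ _
    have h2 : q (f y - y) = q (y - f y) := map_sub_rev q _ _
    have := hFr x hx y hy hxy
    rw [this] at h1
    rw [h2] at h1
    have := (hfspec x hx).2
    have := (hfspec y hy).2
    linarith
  -- maximal such finset
  set A : Set ℕ := {n | ∃ F : Finset X, P F ∧ F.card = n} with hA
  have h2A : 2 ∈ A := by
    refine ⟨{a, b}, ⟨?_, ?_⟩, by simp [hne_ab]⟩
    · intro x hx
      simp only [Finset.coe_insert, Finset.coe_singleton, Set.mem_insert_iff,
        Set.mem_singleton_iff] at hx
      rcases hx with rfl | rfl <;> assumption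
    · intro x hx y hy hxy
      simp only [Finset.mem_insert, Finset.mem_singleton] at hx hy
      rcases hx with rfl | rfl <;> rcases hy with rfl | rfl
      · exact absurd rfl hxy
      · exact hr.symm
      · rw [map_sub_rev]; exact hr.symm
      · exact absurd rfl hxy
  have hAne : A.Nonempty := ⟨2, h2A⟩
  have hAbdd : BddAbove A := ⟨C.card, by rintro n ⟨F, hF, rfl⟩; exact hPcard F hF⟩
  obtain ⟨F, hPF, hFcard⟩ : ∃ F : Finset X, P F ∧ F.card = sSup A :=
    Nat.sSup_mem hAne hAbdd
  have hFmax : ∀ G : Finset X, P G → G.card ≤ F.card := by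
    intro G hG; rw [hFcard]; exact le_csSup hAbdd ⟨G, hG, rfl⟩
  have htwo : 2 ≤ F.card := by
    rw [hFcard]; exact le_csSup hAbdd h2A
  have hnpos : (0 : ℝ) < (F.card : ℝ) := by
    have : 0 < F.card := lt_of_lt_of_le (by norm_num) htwo
    exact_mod_cast this
  have hnne : (F.card : ℝ) ≠ 0 := hnpos.ne'
  set u : X := (F.card : ℝ)⁻¹ • ∑ x ∈ F, x with hu
  have huY : u ∈ convexHull ℝ Y := by
    have := F.centerMass_mem_convexHull (w := fun _ => (1 : ℝ)) (z := id)
      (fun i _ => zero_le_one) (by simpa using hnpos) (fun i hi => hPF.1 hi)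
    simpa [Finset.centerMass, hu] using this
  refine ⟨u, huY, ?_⟩
  have hTset : {t : ℝ | ∃ y ∈ Y, t = q (u - y)} = (fun y => q (u - y)) '' Y := by
    ext t; constructor
    · rintro ⟨y, hy, rfl⟩; exact ⟨y, hy, rfl⟩
    · rintro ⟨y, hy, rfl⟩; exact ⟨y, hy, rfl⟩
  obtain ⟨y₀, hy₀Y, hy₀sup, hy₀max⟩ :=
    hYc.exists_sSup_image_eq_and_ge hYne
      ((hqc.comp (continuous_const.sub continuous_id)).continuousOn
        (f := fun y => q (u - y)))
  rw [hTset, hy₀sup]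
  by_contra hcon
  push_neg at hcon
  -- hcon : r ≤ q (u - y₀)
  have key : u - y₀ = (F.card : ℝ)⁻¹ • ∑ x ∈ F, (x - y₀) := by
    rw [Finset.sum_sub_distrib, Finset.sum_const, smul_sub, hu,
      ← Nat.cast_smul_eq_nsmul ℝ, smul_smul, inv_mul_cancel₀ hnne, one_smul]
  have hq1 : q (u - y₀) = (F.card : ℝ)⁻¹ * q (∑ x ∈ F, (x - y₀)) := by
    rw [key, map_smul_eq_mul, Real.norm_of_nonneg (by positivity)]
  have hq2 : q (∑ x ∈ F, (x - y₀)) ≤ ∑ x ∈ F, q (x - y₀) :=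
    Finset.le_sum_of_subadditive q (map_zero q).le (map_add_le_add q) F _
  have hsum_ge : (F.card : ℝ) * r ≤ ∑ x ∈ F, q (x - y₀) := by
    have h3 : r ≤ (F.card : ℝ)⁻¹ * ∑ x ∈ F, q (x - y₀) := by
      calc r ≤ q (u - y₀) := hcon
        _ = (F.card : ℝ)⁻¹ * q (∑ x ∈ F, (x - y₀)) := hq1
        _ ≤ (F.card : ℝ)⁻¹ * ∑ x ∈ F, q (x - y₀) := by
            exact mul_le_mul_of_nonneg_left hq2 (by positivity)
    calc (F.card : ℝ) * r ≤ (F.card : ℝ) * ((F.card : ℝ)⁻¹ * ∑ x ∈ F, q (x - y₀)) :=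
          mul_le_mul_of_nonneg_left h3 hnpos.le
      _ = ∑ x ∈ F, q (x - y₀) := by field_simp
  have hall : ∀ x ∈ F, q (x - y₀) = r := by
    by_contra hno
    push_neg at hno
    obtain ⟨x, hx, hxne⟩ := hno
    have hxlt : q (x - y₀) < r := lt_of_le_of_ne (hbound x (hPF.1 hx) y₀ hy₀Y) hxne
    have : ∑ x ∈ F, q (x - y₀) < ∑ _x ∈ F, r :=
      Finset.sum_lt_sum (fun i hi => hbound i (hPF.1 hi) y₀ hy₀Y) ⟨x, hx, hxlt⟩
    rw [Finset.sum_const, nsmul_eq_mul] at this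
    linarith
  have hy₀F : y₀ ∉ F := by
    intro h
    have := hall y₀ h
    rw [sub_self, map_zero] at this
    exact hrpos.ne this
  have hG : P (insert y₀ F) := by
    constructor
    · intro x hx
      simp only [Finset.coe_insert, Set.mem_insert_iff] at hx
      rcases hx with rfl | hx
      · exact hy₀Y
      · exact hPF.1 hx
    · intro x hx y hy hxy
      rcases Finset.mem_insert.1 hx with hx' | hx' <;>
        rcases Finset.mem_insert.1 hy with hy' | hy'
      · exact absurd (hx'.trans hy'.symm) hxy
      · subst hx'; rw [map_sub_rev]; exact hall y hy'
      · subst hy'; exact hall x hx'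
      · exact hPF.2 x hx' y hy' hxy
  have := hFmax _ hG
  rw [Finset.card_insert_of_notMem hy₀F] at this
  omega
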